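/- Fix d ≥ 2, rates λ_1,…,λ_d > 0, indices 1 ≤ i < j ≤ d and 1 ≤ k ≤ i. Let Ω = (ω_{rs}) and Ω′ = (ω′_{rs}) be two admissible weight arrays (ω_{rs}, ω′_{rs} ∈ [0,1] for s ≤ r, ω_{11} = ω′_{11} = 1, and Σ_{s=1}^{r} ω_{rs} = Σ_{s=1}^{r} ω′_{rs} = 1 for every r) such that ω_{iℓ} = ω′_{iℓ} for every ℓ ∈ {1,…,i}, ω_{jℓ} = ω′_{jℓ} for every ℓ ∈ {1,…,i} with ℓ ≠ k, and ω_{jk} < ω′_{jk}. Let X = (X_1,…,X_d) be the MP_d(Λ,Ω) vector on ((0,1)^d, μ^d) and X′ = (X′_1,…,X′_d) the MP_d(Λ,Ω′) vector on another copy of ((0,1)^d, μ^d). Then for all s, t ∈ ℕ, μ^d{u : X_i(u) ≤ s and X_j(u) ≤ t} ≤ μ^d{u : X′_i(u) ≤ s and X′_j(u) ≤ t}; that is, (X_i, X_j) precedes (X′_i, X′_j) in the positive quadrant dependence (PQD) order. -/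

import Mathlib

open MeasureTheory

/-- The uniform probability measure on the open interval (0,1):
Lebesgue measure restricted to (0,1). -/
noncomputable def unif : Measure ℝ := volume.restrict (Set.Ioo (0 : ℝ) 1)

/-- The quantile transform of a cdf `F` on ℕ: `q_F(u) = min {n : u ≤ F n}`. -/
noncomputable def qt (F : ℕ → ℝ) (u : ℝ) : ℕ := sInf {n : ℕ | u ≤ F n}

/-- The Poisson(λ) cumulative distribution function on ℕ. -/
noncomputable def poisCdf (l : ℝ) (n : ℕ) : ℝ :=
  ∑ k ∈ Finset.range (n + 1), Real.exp (-l) * l ^ k / (Nat.factorial k)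

/-- The Poisson(λ) probability mass function on ℕ. -/
noncomputable def poisPmf (l : ℝ) (n : ℕ) : ℝ :=
  Real.exp (-l) * l ^ n / (Nat.factorial n)

/-- `F(n-1)` with the convention `F(-1) = 0`. -/
noncomputable def cdfm1 (F : ℕ → ℝ) (n : ℕ) : ℝ := if n = 0 then 0 else F (n - 1)

/-- The product measure μ^d of the uniform measure on (0,1) over coordinates. -/
noncomputable def pmeas (d : ℕ) : Measure (Fin d → ℝ) := Measure.pi (fun _ => unif)

/-- Component `i` of the MP_d(Λ,Ω) vector: `X_i(u) = Σ_{j ≤ i} q_{ω_{ij} λ_i}(u_j)`. -/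
noncomputable def mpX (d : ℕ) (lam : Fin d → ℝ) (om : Fin d → Fin d → ℝ)
    (i : Fin d) (u : Fin d → ℝ) : ℕ :=
  ∑ j ∈ Finset.Iic i, qt (poisCdf (om i j * lam i)) (u j)

open Finset

lemma poisCdf_eq_sum (l : ℝ) (n : ℕ) : poisCdf l n = ∑ k ∈ Finset.range (n+1), poisPmf l k := rfl

lemma poisPmf_nonneg {l : ℝ} (hl : 0 ≤ l) (n : ℕ) : 0 ≤ poisPmf l n := by
  unfold poisPmf
  positivity

lemma poisCdf_nonneg {l : ℝ} (hl : 0 ≤ l) (n : ℕ) : 0 ≤ poisCdf l n := by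
  rw [poisCdf_eq_sum]
  exact Finset.sum_nonneg fun k _ => poisPmf_nonneg hl k

lemma poisCdf_mono {l : ℝ} (hl : 0 ≤ l) : Monotone (poisCdf l) := by
  intro m n hmn
  rw [poisCdf_eq_sum, poisCdf_eq_sum]
  exact Finset.sum_le_sum_of_subset_of_nonneg (by simp [Finset.range_subset]; omega)
    (fun k _ _ => poisPmf_nonneg hl k)

lemma poisCdf_le_one {l : ℝ} (hl : 0 ≤ l) (n : ℕ) : poisCdf l n ≤ 1 := by
  have h : poisCdf l n = Real.exp (-l) * ∑ k ∈ Finset.range (n+1), l ^ k / (Nat.factorial k) := by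
    rw [poisCdf, Finset.mul_sum]; exact Finset.sum_congr rfl fun k _ => by ring
  rw [h]
  have := Real.sum_le_exp_of_nonneg hl (n+1)
  calc Real.exp (-l) * ∑ k ∈ Finset.range (n+1), l ^ k / (Nat.factorial k)
      ≤ Real.exp (-l) * Real.exp l := by
        apply mul_le_mul_of_nonneg_left this (Real.exp_nonneg _)
    _ = 1 := by rw [← Real.exp_add]; simp

lemma exists_le_poisCdf {l : ℝ} (hl : 0 ≤ l) {u : ℝ} (hu : u < 1) : ∃ n, u ≤ poisCdf l n := by
  have hs : HasSum (fun k : ℕ => l ^ k / (Nat.factorial k)) (Real.exp l) := by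
    rw [Real.exp_eq_exp_ℝ]
    exact NormedSpace.expSeries_div_hasSum_exp l
  have ht := hs.tendsto_sum_nat
  have h2 : Filter.Tendsto (fun n => Real.exp (-l) * ∑ k ∈ Finset.range n, l ^ k / (Nat.factorial k))
      Filter.atTop (nhds (Real.exp (-l) * Real.exp l)) := ht.const_mul _
  rw [← Real.exp_add, neg_add_cancel, Real.exp_zero] at h2
  have : ∀ᶠ n in Filter.atTop, u < Real.exp (-l) * ∑ k ∈ Finset.range n, l ^ k / (Nat.factorial k) :=
    h2.eventually_const_lt hu
  obtain ⟨n, hn⟩ := this.exists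
  refine ⟨n, le_of_lt ?_⟩
  calc u < Real.exp (-l) * ∑ k ∈ Finset.range n, l ^ k / (Nat.factorial k) := hn
    _ ≤ poisCdf l n := by
        rw [poisCdf, Finset.mul_sum]
        simp_rw [← mul_div_assoc]
        apply Finset.sum_le_sum_of_subset_of_nonneg (Finset.range_subset_range.2 (by omega))
        intro k _ _; positivity

lemma qt_le_iff {l : ℝ} (hl : 0 ≤ l) {u : ℝ} (hu : u < 1) (n : ℕ) :
    qt (poisCdf l) u ≤ n ↔ u ≤ poisCdf l n := by
  have hne : {m : ℕ | u ≤ poisCdf l m}.Nonempty := exists_le_poisCdf hl hu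
  constructor
  · intro h
    have := Nat.sInf_mem hne
    exact le_trans this (poisCdf_mono hl h)
  · intro h
    exact Nat.sInf_le h

lemma measurable_qt (F : ℕ → ℝ) : Measurable (qt F) := by
  have hle : ∀ n, qt F ⁻¹' (Set.Iic n) =
      (⋃ m ∈ Set.Iic n, Set.Iic (F m)) ∪ ⋂ m, Set.Ioi (F m) := by
    intro n
    ext u
    simp only [Set.mem_preimage, Set.mem_Iic, Set.mem_union, Set.mem_iUnion, Set.mem_iInter,
      Set.mem_Ioi, Set.mem_Iic]
    constructor
    · intro h
      by_cases hne : {m : ℕ | u ≤ F m}.Nonempty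
      · left
        exact ⟨qt F u, h, Nat.sInf_mem hne⟩
      · right
        intro m
        by_contra hc
        push_neg at hc
        exact hne ⟨m, hc⟩
    · rintro (⟨m, hm, hum⟩ | h)
      · exact le_trans (Nat.sInf_le hum) hm
      · have : {m : ℕ | u ≤ F m} = ∅ := by
          ext m; simp only [Set.mem_setOf_eq, Set.mem_empty_iff_false, iff_false, not_le]; exact h m
        simp [qt, this]
    
  apply measurable_to_countable'
  intro n
  have : qt F ⁻¹' {n} = (qt F ⁻¹' (Set.Iic n)) \ (⋃ m ∈ Set.Iio n, qt F ⁻¹' (Set.Iic m)) := by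
    ext u
    simp only [Set.mem_preimage, Set.mem_singleton_iff, Set.mem_diff, Set.mem_Iic, Set.mem_iUnion,
      Set.mem_Iio]
    constructor
    · rintro rfl; exact ⟨le_refl _, by rintro ⟨m, hm, hle⟩; omega⟩
    · rintro ⟨h1, h2⟩
      by_contra hne
      exact h2 ⟨qt F u, by omega, le_refl _⟩
  rw [this]
  have hm : ∀ n : ℕ, MeasurableSet (qt F ⁻¹' (Set.Iic n)) := by
    intro n
    rw [hle n]
    exact ((MeasurableSet.biUnion (Set.to_countable _) fun m _ => measurableSet_Iic).union
      (MeasurableSet.iInter fun m => measurableSet_Ioi))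
  exact (hm n).diff (MeasurableSet.biUnion (Set.to_countable _) fun m _ => hm m)

/-- triangle reindexing -/
lemma tri_sum (m : ℕ) (f : ℕ → ℕ → ℝ) :
    ∑ y ∈ range (m+1), ∑ v ∈ range (y+1), f v (y - v)
      = ∑ v ∈ range (m+1), ∑ w ∈ range (m+1-v), f v w := by
  induction m with
  | zero => simp
  | succ m ih =>
    rw [Finset.sum_range_succ, ih]
    have h1 : ∀ v ∈ range (m+2), ∑ w ∈ range (m+2-v), f v w
        = ∑ w ∈ range (m+1-v), f v w + f v (m+1-v) := by
      intro v hv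
      simp only [mem_range] at hv
      have : m + 2 - v = (m + 1 - v) + 1 := by omega
      rw [this, Finset.sum_range_succ]
    have h2 : ∑ v ∈ range (m+2), ∑ w ∈ range (m+2-v), f v w
        = ∑ v ∈ range (m+2), (∑ w ∈ range (m+1-v), f v w + f v (m+1-v)) :=
      Finset.sum_congr rfl h1
    rw [h2, Finset.sum_add_distrib]
    conv_rhs => rw [Finset.sum_range_succ]
    have h3 : m + 1 - (m+1) = 0 := by omega
    simp [h3]

lemma poisPmf_conv (x y : ℝ) (n : ℕ) :
    poisPmf (x + y) n = ∑ v ∈ range (n+1), poisPmf x v * poisPmf y (n - v) := by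
  unfold poisPmf
  rw [add_pow, Finset.mul_sum, Finset.sum_div]
  apply Finset.sum_congr rfl
  intro v hv
  simp only [mem_range] at hv
  have hv' : v ≤ n := by omega
  have hfac : (n.choose v : ℝ) = (n.factorial : ℝ) / ((v.factorial : ℝ) * ((n-v).factorial : ℝ)) := by
    rw [eq_div_iff (by positivity)]
    rw [← Nat.cast_mul, ← Nat.cast_mul]
    norm_cast
    rw [← Nat.choose_mul_factorial_mul_factorial hv']
    ring
  have hexp : Real.exp (-(x+y)) = Real.exp (-x) * Real.exp (-y) := by
    rw [← Real.exp_add]; ring_nf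
  rw [hexp, hfac]
  have h1 : (v.factorial : ℝ) ≠ 0 := by positivity
  have h2 : ((n-v).factorial : ℝ) ≠ 0 := by positivity
  have h3 : (n.factorial : ℝ) ≠ 0 := by positivity
  field_simp

lemma poisCdf_conv (x y : ℝ) (n : ℕ) :
    poisCdf (x + y) n = ∑ v ∈ range (n+1), poisPmf y v * poisCdf x (n - v) := by
  rw [poisCdf_eq_sum]
  have : ∀ z ∈ range (n+1), poisPmf (x+y) z = ∑ v ∈ range (z+1), poisPmf y v * poisPmf x (z - v) := by
    intro z _
    rw [show x + y = y + x by ring, poisPmf_conv]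
  rw [Finset.sum_congr rfl this, tri_sum n (fun v w => poisPmf y v * poisPmf x w)]
  apply Finset.sum_congr rfl
  intro v hv
  simp only [mem_range] at hv
  rw [← Finset.mul_sum, poisCdf_eq_sum, show n - v + 1 = n + 1 - v from by omega]

lemma core_ineq {A C δ a : ℝ} (hA : 0 ≤ A) (hC : 0 ≤ C) (hδ : 0 ≤ δ) (ha : 0 ≤ a) (m : ℕ) :
    ∑ y ∈ range (m+1), poisPmf (C + δ) y * min a (poisCdf A (m - y))
      ≤ ∑ y ∈ range (m+1), poisPmf C y * min a (poisCdf (A + δ) (m - y)) := by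
  have hmin_nonneg : ∀ n : ℕ, 0 ≤ min a (poisCdf A n) := fun n => le_min ha (poisCdf_nonneg hA n)
  calc ∑ y ∈ range (m+1), poisPmf (C + δ) y * min a (poisCdf A (m - y))
      = ∑ y ∈ range (m+1), ∑ v ∈ range (y+1), poisPmf δ v * poisPmf C (y - v) * min a (poisCdf A (m - y)) := by
        apply Finset.sum_congr rfl
        intro y _
        rw [show C + δ = δ + C by ring, poisPmf_conv, Finset.sum_mul]
    _ = ∑ v ∈ range (m+1), ∑ w ∈ range (m+1-v), poisPmf δ v * poisPmf C w * min a (poisCdf A (m - v - w)) := by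
        rw [← tri_sum m (fun v w => poisPmf δ v * poisPmf C w * min a (poisCdf A (m - v - w)))]
        apply Finset.sum_congr rfl
        intro y hy
        apply Finset.sum_congr rfl
        intro v hv
        simp only [mem_range] at hy hv
        have : m - v - (y - v) = m - y := by omega
        rw [this]
    _ = ∑ w ∈ range (m+1), ∑ v ∈ range (m+1-w), poisPmf δ v * poisPmf C w * min a (poisCdf A (m - v - w)) := by
        apply Finset.sum_comm'
        intro v w
        simp only [mem_range]
        omega
    _ = ∑ w ∈ range (m+1), poisPmf C w * ∑ v ∈ range (m-w+1), poisPmf δ v * min a (poisCdf A (m - w - v)) := by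
        apply Finset.sum_congr rfl
        intro w hw
        simp only [mem_range] at hw
        rw [Finset.mul_sum]
        rw [show m + 1 - w = m - w + 1 by omega]
        apply Finset.sum_congr rfl
        intro v hv
        rw [show m - v - w = m - w - v by omega]
        ring
    _ ≤ ∑ w ∈ range (m+1), poisPmf C w * min a (poisCdf (A + δ) (m - w)) := by
        apply Finset.sum_le_sum
        intro w hw
        simp only [mem_range] at hw
        apply mul_le_mul_of_nonneg_left _ (poisPmf_nonneg hC w)
        apply le_min
        · calc ∑ v ∈ range (m-w+1), poisPmf δ v * min a (poisCdf A (m - w - v))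
              ≤ ∑ v ∈ range (m-w+1), poisPmf δ v * a := by
                apply Finset.sum_le_sum
                intro v _
                exact mul_le_mul_of_nonneg_left (min_le_left _ _) (poisPmf_nonneg hδ v)
            _ = (∑ v ∈ range (m-w+1), poisPmf δ v) * a := by rw [Finset.sum_mul]
            _ = poisCdf δ (m - w) * a := by rw [poisCdf_eq_sum]
            _ ≤ 1 * a := mul_le_mul_of_nonneg_right (poisCdf_le_one hδ _) ha
            _ = a := one_mul a
        · calc ∑ v ∈ range (m-w+1), poisPmf δ v * min a (poisCdf A (m - w - v))
              ≤ ∑ v ∈ range (m-w+1), poisPmf δ v * poisCdf A (m - w - v) := by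
                apply Finset.sum_le_sum
                intro v _
                exact mul_le_mul_of_nonneg_left (min_le_right _ _) (poisPmf_nonneg hδ v)
            _ = poisCdf (A + δ) (m - w) := (poisCdf_conv A δ (m - w)).symm

instance unif_prob : IsProbabilityMeasure unif := by
  constructor
  rw [unif, Measure.restrict_apply MeasurableSet.univ, Set.univ_inter, Real.volume_Ioo]
  norm_num

instance pmeas_prob (d : ℕ) : IsProbabilityMeasure (pmeas d) := by
  rw [pmeas]; infer_instance

lemma unif_apply_le {S : Set ℝ} {c : ℝ} (hc0 : 0 ≤ c) (hc1 : c ≤ 1)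
    (h : ∀ x, x ∈ Set.Ioo (0:ℝ) 1 → (x ∈ S ↔ x ≤ c)) : unif S = ENNReal.ofReal c := by
  rw [unif, Measure.restrict_apply' measurableSet_Ioo]
  apply le_antisymm
  · calc volume (S ∩ Set.Ioo 0 1) ≤ volume (Set.Ioc 0 c) := by
          apply measure_mono
          rintro x ⟨hxS, hx01⟩
          exact ⟨hx01.1, (h x hx01).1 hxS⟩
      _ = ENNReal.ofReal c := by rw [Real.volume_Ioc, sub_zero]
  · calc ENNReal.ofReal c = volume (Set.Ioo 0 c) := by rw [Real.volume_Ioo, sub_zero]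
      _ ≤ volume (S ∩ Set.Ioo 0 1) := by
          apply measure_mono
          rintro x ⟨hx0, hxc⟩
          have hx01 : x ∈ Set.Ioo (0:ℝ) 1 := ⟨hx0, lt_of_lt_of_le hxc hc1⟩
          exact ⟨(h x hx01).2 (le_of_lt hxc), hx01⟩

lemma unif_qt_le {l : ℝ} (hl : 0 ≤ l) (n : ℕ) :
    unif {x | qt (poisCdf l) x ≤ n} = ENNReal.ofReal (poisCdf l n) :=
  unif_apply_le (poisCdf_nonneg hl n) (poisCdf_le_one hl n)
    (fun x hx => qt_le_iff hl hx.2 n)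

lemma unif_qt_pair {ν A : ℝ} (hν : 0 ≤ ν) (hA : 0 ≤ A) (r z : ℕ) :
    unif {x | qt (poisCdf ν) x ≤ r ∧ qt (poisCdf A) x ≤ z}
      = ENNReal.ofReal (min (poisCdf ν r) (poisCdf A z)) := by
  apply unif_apply_le (le_min (poisCdf_nonneg hν r) (poisCdf_nonneg hA z))
    (min_le_of_left_le (poisCdf_le_one hν r))
  intro x hx
  rw [Set.mem_setOf_eq, qt_le_iff hν hx.2, qt_le_iff hA hx.2, le_min_iff]

lemma unif_qt_eq {l : ℝ} (hl : 0 ≤ l) (v : ℕ) :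
    unif {x | qt (poisCdf l) x = v} = ENNReal.ofReal (poisPmf l v) := by
  cases v with
  | zero =>
    have : {x : ℝ | qt (poisCdf l) x = 0} = {x | qt (poisCdf l) x ≤ 0} := by
      ext x; simp [Nat.le_zero]
    rw [this, unif_qt_le hl 0, poisCdf_eq_sum]
    simp
  | succ v =>
    have hset : {x : ℝ | qt (poisCdf l) x = v + 1}
        = {x | qt (poisCdf l) x ≤ v + 1} \ {x | qt (poisCdf l) x ≤ v} := by
      ext x; simp only [Set.mem_setOf_eq, Set.mem_diff]; omega
    have hsub : {x : ℝ | qt (poisCdf l) x ≤ v} ⊆ {x | qt (poisCdf l) x ≤ v + 1} := by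
      intro x hx; simp only [Set.mem_setOf_eq] at *; omega
    have hmeas : MeasurableSet {x : ℝ | qt (poisCdf l) x ≤ v} := by
      have : {x : ℝ | qt (poisCdf l) x ≤ v} = qt (poisCdf l) ⁻¹' (Set.Iic v) := rfl
      rw [this]; exact measurable_qt _ measurableSet_Iic
    rw [hset, measure_diff hsub hmeas.nullMeasurableSet (measure_ne_top _ _),
      unif_qt_le hl (v+1), unif_qt_le hl v,
      ← ENNReal.ofReal_sub _ (poisCdf_nonneg hl v)]
    congr 1
    rw [poisCdf_eq_sum, poisCdf_eq_sum, Finset.sum_range_succ]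
    ring

lemma pmeas_eval {d : ℕ} (k : Fin d) (C : Set ℝ) (hC : MeasurableSet C) :
    pmeas d ((fun u => u k) ⁻¹' C) = unif C := by
  have hset : (fun u : Fin d → ℝ => u k) ⁻¹' C
      = Set.pi Set.univ (fun l => if l = k then C else Set.univ) := by
    ext u
    simp only [Set.mem_preimage, Set.mem_pi, Set.mem_univ, true_implies]
    constructor
    · intro h l
      by_cases hl : l = k
      · subst hl; simp [h]
      · simp [hl]
    · intro h
      have := h k
      simpa using this
  rw [hset, pmeas, Measure.pi_pi]
  rw [Finset.prod_eq_single k]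
  · simp
  · intro l _ hl; simp [hl]
  · intro h; exact absurd (Finset.mem_univ k) h

lemma fact_mul {d : ℕ} (p : Fin d → Prop) [DecidablePred p] {α β : Type*}
    [MeasurableSpace α] [MeasurableSpace β]
    {f₀ : ({l : Fin d // p l} → ℝ) → α} {g₀ : ({l : Fin d // ¬ p l} → ℝ) → β}
    (hf : Measurable f₀) (hg : Measurable g₀) {A : Set α} {B : Set β}
    (hA : MeasurableSet A) (hB : MeasurableSet B) :
    pmeas d {u | f₀ (fun l => u l.1) ∈ A ∧ g₀ (fun l => u l.1) ∈ B}
      = pmeas d {u | f₀ (fun l => u l.1) ∈ A} * pmeas d {u | g₀ (fun l => u l.1) ∈ B} := by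
  have hmp := MeasureTheory.measurePreserving_piEquivPiSubtypeProd (fun _ : Fin d => unif) p
  have key : ∀ (A : Set α) (B : Set β), MeasurableSet A → MeasurableSet B →
      pmeas d {u | f₀ (fun l => u l.1) ∈ A ∧ g₀ (fun l => u l.1) ∈ B}
        = (Measure.pi fun _ : {l : Fin d // p l} => unif) (f₀ ⁻¹' A)
          * (Measure.pi fun _ : {l : Fin d // ¬ p l} => unif) (g₀ ⁻¹' B) := by
    intro A B hA hB
    have hset : {u : Fin d → ℝ | f₀ (fun l => u l.1) ∈ A ∧ g₀ (fun l => u l.1) ∈ B}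
        = (MeasurableEquiv.piEquivPiSubtypeProd (fun _ : Fin d => ℝ) p) ⁻¹'
            ((f₀ ⁻¹' A) ×ˢ (g₀ ⁻¹' B)) := rfl
    rw [pmeas, hset, hmp.measure_preimage ((hf hA).prod (hg hB)).nullMeasurableSet,
      Measure.prod_prod]
  have h1 := key A Set.univ hA MeasurableSet.univ
  have h2 := key Set.univ B MeasurableSet.univ hB
  have h3 := key A B hA hB
  simp only [Set.mem_univ, and_true, true_and, Set.preimage_univ, measure_univ, mul_one, one_mul]
    at h1 h2
  rw [h3, h1, h2]

-- measurability of qt-sums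
lemma measurable_qt_eval {d : ℕ} (F : ℕ → ℝ) (k : Fin d) :
    Measurable (fun u : Fin d → ℝ => qt F (u k)) :=
  (measurable_qt F).comp (measurable_pi_apply k)

lemma measurable_qt_sum {d : ℕ} (c : Fin d → ℝ) (I : Finset (Fin d)) :
    Measurable (fun u : Fin d → ℝ => ∑ l ∈ I, qt (poisCdf (c l)) (u l)) :=
  Finset.measurable_sum I (fun l _ => measurable_qt_eval _ l)

lemma nat_set_meas {α : Type*} [Countable α] [MeasurableSpace α] [MeasurableSingletonClass α]
    (S : Set α) : MeasurableSet S := S.to_countable.measurableSet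

lemma sumdist {d : ℕ} (I : Finset (Fin d)) (c : Fin d → ℝ) (hc : ∀ l ∈ I, 0 ≤ c l) (y : ℕ) :
    pmeas d {u | ∑ l ∈ I, qt (poisCdf (c l)) (u l) = y}
      = ENNReal.ofReal (poisPmf (∑ l ∈ I, c l) y) := by
  induction I using Finset.cons_induction generalizing y with
  | empty =>
    simp only [Finset.sum_empty]
    cases y with
    | zero =>
      have : {u : Fin d → ℝ | 0 = 0} = Set.univ := by ext u; simp
      rw [this, measure_univ]
      unfold poisPmf
      norm_num
    | succ y =>
      have : {u : Fin d → ℝ | 0 = y + 1} = ∅ := by ext u; simp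
      rw [this, measure_empty]
      unfold poisPmf
      rw [zero_pow (by omega)]
      norm_num
  | cons a I ha ih =>
    have hdecomp : {u : Fin d → ℝ | ∑ l ∈ cons a I ha, qt (poisCdf (c l)) (u l) = y}
        = ⋃ v ∈ Finset.range (y+1),
            ({u : Fin d → ℝ | qt (poisCdf (c a)) (u a) = v}
              ∩ {u | ∑ l ∈ I, qt (poisCdf (c l)) (u l) = y - v}) := by
      ext u
      simp only [Finset.sum_cons, Set.mem_setOf_eq, Set.mem_iUnion, Finset.mem_range,
        Set.mem_inter_iff, exists_prop]
      constructor
      · intro h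
        exact ⟨qt (poisCdf (c a)) (u a), by omega, rfl, by omega⟩
      · rintro ⟨v, hv, h1, h2⟩
        omega
    rw [hdecomp, measure_biUnion_finset]
    rotate_left
    · intro v hv w hw hvw
      simp only [Function.onFun]
      apply Set.disjoint_left.2
      rintro u ⟨h1, _⟩ ⟨h2, _⟩
      simp only [Set.mem_setOf_eq] at h1 h2
      exact hvw (h1 ▸ h2 ▸ rfl)
    · intro v _
      exact (measurable_qt_eval _ a (measurableSet_singleton v)).inter
        (measurable_qt_sum c I (measurableSet_singleton (y - v)))
    · have hterm : ∀ v ∈ Finset.range (y+1),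
          pmeas d ({u : Fin d → ℝ | qt (poisCdf (c a)) (u a) = v}
            ∩ {u | ∑ l ∈ I, qt (poisCdf (c l)) (u l) = y - v})
          = ENNReal.ofReal (poisPmf (c a) v) * ENNReal.ofReal (poisPmf (∑ l ∈ I, c l) (y - v)) := by
        intro v _
        classical
        have hne : ∀ l : Fin d, l ∈ I → ¬ (l = a) := fun l hl he => ha (he ▸ hl)
        set f₀ : ({l : Fin d // l = a} → ℝ) → ℕ := fun z => qt (poisCdf (c a)) (z ⟨a, rfl⟩) with hf₀
        set g₀ : ({l : Fin d // ¬ l = a} → ℝ) → ℕ :=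
          fun z => ∑ l ∈ I.attach, qt (poisCdf (c l.1)) (z ⟨l.1, hne l.1 l.2⟩) with hg₀
        have hset : {u : Fin d → ℝ | qt (poisCdf (c a)) (u a) = v}
              ∩ {u | ∑ l ∈ I, qt (poisCdf (c l)) (u l) = y - v}
            = {u : Fin d → ℝ | f₀ (fun l => u l.1) ∈ ({v} : Set ℕ)
                ∧ g₀ (fun l => u l.1) ∈ ({y - v} : Set ℕ)} := by
          ext u
          simp only [Set.mem_inter_iff, Set.mem_setOf_eq, Set.mem_singleton_iff, hf₀, hg₀]
          have : ∑ l ∈ I.attach, qt (poisCdf (c l.1)) (u l.1)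
              = ∑ l ∈ I, qt (poisCdf (c l)) (u l) :=
            Finset.sum_attach I (fun x => qt (poisCdf (c x)) (u x))
          rw [this]
        have hfm : Measurable f₀ := (measurable_qt _).comp (measurable_pi_apply _)
        have hgm : Measurable g₀ :=
          Finset.measurable_sum _ (fun l _ => (measurable_qt _).comp (measurable_pi_apply _))
        rw [hset, fact_mul _ hfm hgm (nat_set_meas _) (nat_set_meas _)]
        congr 1
        · have : {u : Fin d → ℝ | f₀ (fun l => u l.1) ∈ ({v} : Set ℕ)}
              = (fun u : Fin d → ℝ => u a) ⁻¹' {x | qt (poisCdf (c a)) x = v} := rfl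
          have h2 := pmeas_eval a {x | qt (poisCdf (c a)) x = v}
            ((measurable_qt _) (measurableSet_singleton v))
          rw [this, h2]
          exact unif_qt_eq (hc a (Finset.mem_cons_self a I)) v
        · have : {u : Fin d → ℝ | g₀ (fun l => u l.1) ∈ ({y - v} : Set ℕ)}
              = {u : Fin d → ℝ | ∑ l ∈ I, qt (poisCdf (c l)) (u l) = y - v} := by
            ext u
            simp only [Set.mem_setOf_eq, Set.mem_singleton_iff, hg₀]
            rw [Finset.sum_attach I (fun x => qt (poisCdf (c x)) (u x))]
          rw [this]
          exact ih (fun l hl => hc l (Finset.mem_cons_of_mem hl)) (y - v)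
      rw [Finset.sum_congr rfl hterm]
      have hnn : ∀ v ∈ Finset.range (y+1), 0 ≤ poisPmf (c a) v * poisPmf (∑ l ∈ I, c l) (y - v) :=
        fun v _ => mul_nonneg (poisPmf_nonneg (hc a (Finset.mem_cons_self a I)) v)
          (poisPmf_nonneg (Finset.sum_nonneg fun l hl => hc l (Finset.mem_cons_of_mem hl)) _)
      calc ∑ v ∈ Finset.range (y+1),
            ENNReal.ofReal (poisPmf (c a) v) * ENNReal.ofReal (poisPmf (∑ l ∈ I, c l) (y - v))
          = ∑ v ∈ Finset.range (y+1),
            ENNReal.ofReal (poisPmf (c a) v * poisPmf (∑ l ∈ I, c l) (y - v)) := by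
            apply Finset.sum_congr rfl
            intro v _
            rw [ENNReal.ofReal_mul (poisPmf_nonneg (hc a (Finset.mem_cons_self a I)) v)]
        _ = ENNReal.ofReal (∑ v ∈ Finset.range (y+1),
              poisPmf (c a) v * poisPmf (∑ l ∈ I, c l) (y - v)) :=
            (ENNReal.ofReal_sum_of_nonneg hnn).symm
        _ = ENNReal.ofReal (poisPmf (∑ l ∈ cons a I ha, c l) y) := by
            rw [Finset.sum_cons, poisPmf_conv]

lemma rest_measure {d : ℕ} (k : Fin d) (T : Finset (Fin d)) (hkT : k ∉ T)
    (ν A : ℝ) (hν : 0 ≤ ν) (hA : 0 ≤ A) (c : Fin d → ℝ) (hc : ∀ l ∈ T, 0 ≤ c l) (r m : ℕ) :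
    pmeas d {u | qt (poisCdf ν) (u k) ≤ r
        ∧ qt (poisCdf A) (u k) + ∑ l ∈ T, qt (poisCdf (c l)) (u l) ≤ m}
      = ENNReal.ofReal (∑ y ∈ range (m+1),
          poisPmf (∑ l ∈ T, c l) y * min (poisCdf ν r) (poisCdf A (m - y))) := by
  classical
  have hdecomp : {u : Fin d → ℝ | qt (poisCdf ν) (u k) ≤ r
        ∧ qt (poisCdf A) (u k) + ∑ l ∈ T, qt (poisCdf (c l)) (u l) ≤ m}
      = ⋃ y ∈ Finset.range (m+1),
          ({u : Fin d → ℝ | ∑ l ∈ T, qt (poisCdf (c l)) (u l) = y}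
            ∩ {u | qt (poisCdf ν) (u k) ≤ r ∧ qt (poisCdf A) (u k) ≤ m - y}) := by
    ext u
    simp only [Set.mem_setOf_eq, Set.mem_iUnion, Finset.mem_range, Set.mem_inter_iff, exists_prop]
    constructor
    · rintro ⟨h1, h2⟩
      exact ⟨∑ l ∈ T, qt (poisCdf (c l)) (u l), by omega, rfl, h1, by omega⟩
    · rintro ⟨y, hy, h1, h2, h3⟩
      exact ⟨h2, by omega⟩
  rw [hdecomp, measure_biUnion_finset]
  rotate_left
  · intro y hy w hw hvw
    simp only [Function.onFun]
    apply Set.disjoint_left.2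
    rintro u ⟨h1, _⟩ ⟨h2, _⟩
    simp only [Set.mem_setOf_eq] at h1 h2
    exact hvw (h1 ▸ h2 ▸ rfl)
  · intro y _
    exact (measurable_qt_sum c T (measurableSet_singleton y)).inter
      (((measurable_qt_eval _ k (measurableSet_Iic (a := r))).inter
        (measurable_qt_eval _ k (measurableSet_Iic (a := m - y)))))
  · have hterm : ∀ y ∈ Finset.range (m+1),
        pmeas d ({u : Fin d → ℝ | ∑ l ∈ T, qt (poisCdf (c l)) (u l) = y}
          ∩ {u | qt (poisCdf ν) (u k) ≤ r ∧ qt (poisCdf A) (u k) ≤ m - y})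
        = ENNReal.ofReal (poisPmf (∑ l ∈ T, c l) y)
          * ENNReal.ofReal (min (poisCdf ν r) (poisCdf A (m - y))) := by
      intro y _
      have hne : ∀ l : Fin d, l ∈ T → ¬ (l = k) := fun l hl he => hkT (he ▸ hl)
      set f₀ : ({l : Fin d // ¬ l = k} → ℝ) → ℕ :=
        fun z => ∑ l ∈ T.attach, qt (poisCdf (c l.1)) (z ⟨l.1, hne l.1 l.2⟩) with hf₀
      set g₀ : ({l : Fin d // l = k} → ℝ) → ℕ × ℕ :=
        fun z => (qt (poisCdf ν) (z ⟨k, rfl⟩), qt (poisCdf A) (z ⟨k, rfl⟩)) with hg₀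
      have hset : {u : Fin d → ℝ | ∑ l ∈ T, qt (poisCdf (c l)) (u l) = y}
            ∩ {u | qt (poisCdf ν) (u k) ≤ r ∧ qt (poisCdf A) (u k) ≤ m - y}
          = {u : Fin d → ℝ | g₀ (fun l => u l.1) ∈ {q : ℕ × ℕ | q.1 ≤ r ∧ q.2 ≤ m - y}
              ∧ f₀ (fun l => u l.1) ∈ ({y} : Set ℕ)} := by
        ext u
        simp only [Set.mem_inter_iff, Set.mem_setOf_eq, Set.mem_singleton_iff, hf₀, hg₀]
        rw [Finset.sum_attach T (fun x => qt (poisCdf (c x)) (u x))]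
        tauto
      have hgm : Measurable g₀ :=
        ((measurable_qt _).comp (measurable_pi_apply _)).prodMk
          ((measurable_qt _).comp (measurable_pi_apply _))
      have hfm : Measurable f₀ :=
        Finset.measurable_sum _ (fun l _ => (measurable_qt _).comp (measurable_pi_apply _))
      rw [hset, fact_mul _ hgm hfm (nat_set_meas _) (nat_set_meas _)]
      rw [mul_comm]
      congr 1
      · have : {u : Fin d → ℝ | f₀ (fun l => u l.1) ∈ ({y} : Set ℕ)}
            = {u : Fin d → ℝ | ∑ l ∈ T, qt (poisCdf (c l)) (u l) = y} := by
          ext u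
          simp only [Set.mem_setOf_eq, Set.mem_singleton_iff, hf₀]
          rw [Finset.sum_attach T (fun x => qt (poisCdf (c x)) (u x))]
        rw [this, sumdist T c hc y]
      · have : {u : Fin d → ℝ | g₀ (fun l => u l.1) ∈ {q : ℕ × ℕ | q.1 ≤ r ∧ q.2 ≤ m - y}}
            = (fun u : Fin d → ℝ => u k) ⁻¹'
                {x | qt (poisCdf ν) x ≤ r ∧ qt (poisCdf A) x ≤ m - y} := rfl
        have h2 := pmeas_eval k {x | qt (poisCdf ν) x ≤ r ∧ qt (poisCdf A) x ≤ m - y}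
          (((measurable_qt _) (measurableSet_Iic (a := r))).inter
            ((measurable_qt _) (measurableSet_Iic (a := m - y))))
        rw [this, h2]
        exact unif_qt_pair hν hA r (m - y)
    rw [Finset.sum_congr rfl hterm]
    have hnn : ∀ y ∈ Finset.range (m+1),
        0 ≤ poisPmf (∑ l ∈ T, c l) y * min (poisCdf ν r) (poisCdf A (m - y)) := by
      intro y _
      exact mul_nonneg (poisPmf_nonneg (Finset.sum_nonneg hc) y)
        (le_min (poisCdf_nonneg hν r) (poisCdf_nonneg hA _))
    rw [ENNReal.ofReal_sum_of_nonneg hnn]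
    apply Finset.sum_congr rfl
    intro y _
    rw [ENNReal.ofReal_mul (poisPmf_nonneg (Finset.sum_nonneg hc) y)]

lemma main_decomp {d : ℕ} (k : Fin d) (S1 T : Finset (Fin d)) (hkS1 : k ∉ S1) (hkT : k ∉ T)
    (hTS1 : ∀ l ∈ T, l ∉ S1) (av bv : Fin d → ℝ) (ν A : ℝ) (hν : 0 ≤ ν) (hA : 0 ≤ A)
    (hbv : ∀ l ∈ T, 0 ≤ bv l) (s t : ℕ) :
    pmeas d {u | qt (poisCdf ν) (u k) + ∑ l ∈ S1, qt (poisCdf (av l)) (u l) ≤ s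
        ∧ qt (poisCdf A) (u k) + ∑ l ∈ S1, qt (poisCdf (bv l)) (u l)
            + ∑ l ∈ T, qt (poisCdf (bv l)) (u l) ≤ t}
      = ∑ q ∈ (range (s+1)) ×ˢ (range (t+1)),
          pmeas d {u : Fin d → ℝ | (∑ l ∈ S1, qt (poisCdf (av l)) (u l),
              ∑ l ∈ S1, qt (poisCdf (bv l)) (u l)) = q}
            * ENNReal.ofReal (∑ y ∈ range ((t - q.2)+1),
                poisPmf (∑ l ∈ T, bv l) y
                  * min (poisCdf ν (s - q.1)) (poisCdf A ((t - q.2) - y))) := by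
  classical
  have hdecomp : {u : Fin d → ℝ | qt (poisCdf ν) (u k) + ∑ l ∈ S1, qt (poisCdf (av l)) (u l) ≤ s
        ∧ qt (poisCdf A) (u k) + ∑ l ∈ S1, qt (poisCdf (bv l)) (u l)
            + ∑ l ∈ T, qt (poisCdf (bv l)) (u l) ≤ t}
      = ⋃ q ∈ (range (s+1)) ×ˢ (range (t+1)),
          ({u : Fin d → ℝ | (∑ l ∈ S1, qt (poisCdf (av l)) (u l),
              ∑ l ∈ S1, qt (poisCdf (bv l)) (u l)) = q}
            ∩ {u | qt (poisCdf ν) (u k) ≤ s - q.1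
                ∧ qt (poisCdf A) (u k) + ∑ l ∈ T, qt (poisCdf (bv l)) (u l) ≤ t - q.2}) := by
    ext u
    simp only [Set.mem_setOf_eq, Set.mem_iUnion, Finset.mem_product, Finset.mem_range,
      Set.mem_inter_iff, exists_prop, Prod.exists]
    constructor
    · rintro ⟨h1, h2⟩
      exact ⟨∑ l ∈ S1, qt (poisCdf (av l)) (u l), ∑ l ∈ S1, qt (poisCdf (bv l)) (u l),
        ⟨by omega, by omega⟩, rfl, by omega, by omega⟩
    · rintro ⟨v, w, ⟨hv, hw⟩, heq, h1, h2⟩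
      have hv' : (∑ l ∈ S1, qt (poisCdf (av l)) (u l)) = v := congrArg Prod.fst heq
      have hw' : (∑ l ∈ S1, qt (poisCdf (bv l)) (u l)) = w := congrArg Prod.snd heq
      constructor <;> omega
  rw [hdecomp, measure_biUnion_finset]
  rotate_left
  · rintro q hq q' hq' hqq'
    simp only [Function.onFun]
    apply Set.disjoint_left.2
    rintro u ⟨h1, _⟩ ⟨h2, _⟩
    simp only [Set.mem_setOf_eq] at h1 h2
    exact hqq' (h1 ▸ h2 ▸ rfl)
  · intro q _
    exact (((measurable_qt_sum av S1).prodMk (measurable_qt_sum bv S1))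
        (measurableSet_singleton q)).inter
      (((measurable_qt_eval _ k (measurableSet_Iic (a := s - q.1))).inter
        (((measurable_qt_eval (poisCdf A) k).add (measurable_qt_sum bv T))
          (measurableSet_Iic (a := t - q.2)))))
  · apply Finset.sum_congr rfl
    intro q _
    set f₀ : ({l : Fin d // l ∈ S1} → ℝ) → ℕ × ℕ :=
      fun z => (∑ l ∈ S1.attach, qt (poisCdf (av l.1)) (z l),
        ∑ l ∈ S1.attach, qt (poisCdf (bv l.1)) (z l)) with hf₀
    set g₀ : ({l : Fin d // ¬ l ∈ S1} → ℝ) → ℕ × ℕ :=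
      fun z => (qt (poisCdf ν) (z ⟨k, hkS1⟩),
        qt (poisCdf A) (z ⟨k, hkS1⟩)
          + ∑ l ∈ T.attach, qt (poisCdf (bv l.1)) (z ⟨l.1, hTS1 l.1 l.2⟩)) with hg₀
    have hsum1 : ∀ u : Fin d → ℝ, ∑ l ∈ S1.attach, qt (poisCdf (av l.1)) (u l.1)
        = ∑ l ∈ S1, qt (poisCdf (av l)) (u l) :=
      fun u => Finset.sum_attach S1 (fun x => qt (poisCdf (av x)) (u x))
    have hsum2 : ∀ u : Fin d → ℝ, ∑ l ∈ S1.attach, qt (poisCdf (bv l.1)) (u l.1)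
        = ∑ l ∈ S1, qt (poisCdf (bv l)) (u l) :=
      fun u => Finset.sum_attach S1 (fun x => qt (poisCdf (bv x)) (u x))
    have hsum3 : ∀ u : Fin d → ℝ, ∑ l ∈ T.attach, qt (poisCdf (bv l.1)) (u l.1)
        = ∑ l ∈ T, qt (poisCdf (bv l)) (u l) :=
      fun u => Finset.sum_attach T (fun x => qt (poisCdf (bv x)) (u x))
    have hset : ({u : Fin d → ℝ | (∑ l ∈ S1, qt (poisCdf (av l)) (u l),
            ∑ l ∈ S1, qt (poisCdf (bv l)) (u l)) = q}
          ∩ {u | qt (poisCdf ν) (u k) ≤ s - q.1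
              ∧ qt (poisCdf A) (u k) + ∑ l ∈ T, qt (poisCdf (bv l)) (u l) ≤ t - q.2})
        = {u : Fin d → ℝ | f₀ (fun l => u l.1) ∈ ({q} : Set (ℕ × ℕ))
            ∧ g₀ (fun l => u l.1) ∈ {p : ℕ × ℕ | p.1 ≤ s - q.1 ∧ p.2 ≤ t - q.2}} := by
      ext u
      simp only [Set.mem_inter_iff, Set.mem_setOf_eq, Set.mem_singleton_iff, hf₀, hg₀]
      rw [hsum1 u, hsum2 u, hsum3 u]
    have hfm : Measurable f₀ :=
      (Finset.measurable_sum _ (fun l _ => (measurable_qt _).comp (measurable_pi_apply _))).prodMk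
        (Finset.measurable_sum _ (fun l _ => (measurable_qt _).comp (measurable_pi_apply _)))
    have hgm : Measurable g₀ :=
      ((measurable_qt _).comp (measurable_pi_apply _)).prodMk
        (((measurable_qt _).comp (measurable_pi_apply _)).add
          (Finset.measurable_sum _ (fun l _ => (measurable_qt _).comp (measurable_pi_apply _))))
    rw [hset, fact_mul _ hfm hgm (nat_set_meas _) (nat_set_meas _)]
    congr 1
    · congr 1
      ext u
      simp only [Set.mem_setOf_eq, Set.mem_singleton_iff, hf₀]
      rw [hsum1 u, hsum2 u]
    · have hs2 : {u : Fin d → ℝ | g₀ (fun l => u l.1) ∈ {p : ℕ × ℕ | p.1 ≤ s - q.1 ∧ p.2 ≤ t - q.2}}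
          = {u : Fin d → ℝ | qt (poisCdf ν) (u k) ≤ s - q.1
              ∧ qt (poisCdf A) (u k) + ∑ l ∈ T, qt (poisCdf (bv l)) (u l) ≤ t - q.2} := by
        ext u
        simp only [Set.mem_setOf_eq, hg₀]
        rw [hsum3 u]
      rw [hs2]
      exact rest_measure k T hkT ν A hν hA bv hbv (s - q.1) (t - q.2)

/-- Pairwise PQD ordering in the MP_d(Λ,Ω) model: if the two admissible weight arrays Ω, Ω′
agree except that `ω_{jk} < ω′_{jk}`, then `(X_i, X_j) ≺_PQD (X′_i, X′_j)`. -/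
theorem mp_pairwise_pqd (d : ℕ) (hd : 2 ≤ d)
    (lam : Fin d → ℝ) (hlam : ∀ r, 0 < lam r)
    (om om' : Fin d → Fin d → ℝ)
    (hom0 : ∀ r s : Fin d, s ≤ r → 0 ≤ om r s)
    (hom1 : ∀ r s : Fin d, s ≤ r → om r s ≤ 1)
    (hom0' : ∀ r s : Fin d, s ≤ r → 0 ≤ om' r s)
    (hom1' : ∀ r s : Fin d, s ≤ r → om' r s ≤ 1)
    (h11 : om ⟨0, by omega⟩ ⟨0, by omega⟩ = 1)
    (h11' : om' ⟨0, by omega⟩ ⟨0, by omega⟩ = 1)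
    (hsum : ∀ r : Fin d, ∑ s ∈ Finset.Iic r, om r s = 1)
    (hsum' : ∀ r : Fin d, ∑ s ∈ Finset.Iic r, om' r s = 1)
    (i j k : Fin d) (hij : i < j) (hki : k ≤ i)
    (hieq : ∀ l : Fin d, l ≤ i → om i l = om' i l)
    (hjeq : ∀ l : Fin d, l ≤ i → l ≠ k → om j l = om' j l)
    (hlt : om j k < om' j k)
    (s t : ℕ) :
    pmeas d {u : Fin d → ℝ | mpX d lam om i u ≤ s ∧ mpX d lam om j u ≤ t}
      ≤ pmeas d {u : Fin d → ℝ | mpX d lam om' i u ≤ s ∧ mpX d lam om' j u ≤ t} := by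
  classical
  set S1 : Finset (Fin d) := (Finset.Iic i).erase k with hS1def
  set T : Finset (Fin d) := Finset.Ioc i j with hTdef
  have hki' : k ∈ Finset.Iic i := Finset.mem_Iic.2 hki
  have hkS1 : k ∉ S1 := Finset.notMem_erase _ _
  have hkT : k ∉ T := by
    simp only [hTdef, Finset.mem_Ioc, not_and]
    intro h
    exact absurd h (not_lt.2 hki)
  have hTS1 : ∀ l ∈ T, l ∉ S1 := by
    intro l hl hl'
    have h1 : l ≤ i := Finset.mem_Iic.1 (Finset.mem_of_mem_erase hl')
    have h2 : i < l := (Finset.mem_Ioc.1 hl).1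
    exact absurd h1 (not_le.2 h2)
  have hS1sub : ∀ l ∈ S1, l ≤ i := fun l hl => Finset.mem_Iic.1 (Finset.mem_of_mem_erase hl)
  have hS1ne : ∀ l ∈ S1, l ≠ k := fun l hl => Finset.ne_of_mem_erase hl
  have hTle : ∀ l ∈ T, l ≤ j := fun l hl => (Finset.mem_Ioc.1 hl).2
  have hkj : k ≤ j := le_trans hki (le_of_lt hij)
  -- split of Iic j
  have hunion : Finset.Iic j = Finset.Iic i ∪ T := by
    ext l
    simp only [Finset.mem_Iic, Finset.mem_union, hTdef, Finset.mem_Ioc]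
    constructor
    · intro h
      rcases le_or_gt l i with h'|h'
      · exact Or.inl h'
      · exact Or.inr ⟨h', h⟩
    · rintro (h|h)
      · exact le_trans h (le_of_lt hij)
      · exact h.2
  have hdisjoint : Disjoint (Finset.Iic i) T := by
    rw [Finset.disjoint_left]
    intro l hl hl'
    exact absurd (Finset.mem_Iic.1 hl) (not_le.2 (Finset.mem_Ioc.1 hl').1)
  -- rewriting mpX
  have hmpXi : ∀ (oo : Fin d → Fin d → ℝ) (u : Fin d → ℝ), mpX d lam oo i u
      = qt (poisCdf (oo i k * lam i)) (u k) + ∑ l ∈ S1, qt (poisCdf (oo i l * lam i)) (u l) := by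
    intro oo u
    rw [mpX, ← Finset.add_sum_erase _ _ hki']
  have hmpXj : ∀ (oo : Fin d → Fin d → ℝ) (u : Fin d → ℝ), mpX d lam oo j u
      = qt (poisCdf (oo j k * lam j)) (u k) + ∑ l ∈ S1, qt (poisCdf (oo j l * lam j)) (u l)
          + ∑ l ∈ T, qt (poisCdf (oo j l * lam j)) (u l) := by
    intro oo u
    rw [mpX, hunion, Finset.sum_union hdisjoint, ← Finset.add_sum_erase _ _ hki']
  -- apply main_decomp on both sides
  have hLHS := main_decomp k S1 T hkS1 hkT hTS1 (fun l => om i l * lam i)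
    (fun l => om j l * lam j) (om i k * lam i) (om j k * lam j)
    (mul_nonneg (hom0 i k hki) (hlam i).le) (mul_nonneg (hom0 j k hkj) (hlam j).le)
    (fun l hl => mul_nonneg (hom0 j l (hTle l hl)) (hlam j).le) s t
  have hRHS := main_decomp k S1 T hkS1 hkT hTS1 (fun l => om' i l * lam i)
    (fun l => om' j l * lam j) (om' i k * lam i) (om' j k * lam j)
    (mul_nonneg (hom0' i k hki) (hlam i).le) (mul_nonneg (hom0' j k hkj) (hlam j).le)
    (fun l hl => mul_nonneg (hom0' j l (hTle l hl)) (hlam j).le) s t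
  have hsetL : {u : Fin d → ℝ | mpX d lam om i u ≤ s ∧ mpX d lam om j u ≤ t}
      = {u : Fin d → ℝ | qt (poisCdf (om i k * lam i)) (u k)
            + ∑ l ∈ S1, qt (poisCdf (om i l * lam i)) (u l) ≤ s
          ∧ qt (poisCdf (om j k * lam j)) (u k) + ∑ l ∈ S1, qt (poisCdf (om j l * lam j)) (u l)
            + ∑ l ∈ T, qt (poisCdf (om j l * lam j)) (u l) ≤ t} := by
    ext u; rw [Set.mem_setOf_eq, Set.mem_setOf_eq, hmpXi om u, hmpXj om u]
  have hsetR : {u : Fin d → ℝ | mpX d lam om' i u ≤ s ∧ mpX d lam om' j u ≤ t}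
      = {u : Fin d → ℝ | qt (poisCdf (om' i k * lam i)) (u k)
            + ∑ l ∈ S1, qt (poisCdf (om' i l * lam i)) (u l) ≤ s
          ∧ qt (poisCdf (om' j k * lam j)) (u k) + ∑ l ∈ S1, qt (poisCdf (om' j l * lam j)) (u l)
            + ∑ l ∈ T, qt (poisCdf (om' j l * lam j)) (u l) ≤ t} := by
    ext u; rw [Set.mem_setOf_eq, Set.mem_setOf_eq, hmpXi om' u, hmpXj om' u]
  rw [hsetL, hsetR, hLHS, hRHS]
  -- compare termwise
  apply Finset.sum_le_sum
  intro q hq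
  -- the VW sets coincide
  have hVW : {u : Fin d → ℝ | (∑ l ∈ S1, qt (poisCdf (om i l * lam i)) (u l),
        ∑ l ∈ S1, qt (poisCdf (om j l * lam j)) (u l)) = q}
      = {u : Fin d → ℝ | (∑ l ∈ S1, qt (poisCdf (om' i l * lam i)) (u l),
        ∑ l ∈ S1, qt (poisCdf (om' j l * lam j)) (u l)) = q} := by
    have e1 : ∀ u : Fin d → ℝ, ∑ l ∈ S1, qt (poisCdf (om i l * lam i)) (u l)
        = ∑ l ∈ S1, qt (poisCdf (om' i l * lam i)) (u l) := by
      intro u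
      apply Finset.sum_congr rfl
      intro l hl
      rw [hieq l (hS1sub l hl)]
    have e2 : ∀ u : Fin d → ℝ, ∑ l ∈ S1, qt (poisCdf (om j l * lam j)) (u l)
        = ∑ l ∈ S1, qt (poisCdf (om' j l * lam j)) (u l) := by
      intro u
      apply Finset.sum_congr rfl
      intro l hl
      rw [hjeq l (hS1sub l hl) (hS1ne l hl)]
    ext u
    rw [Set.mem_setOf_eq, Set.mem_setOf_eq, e1 u, e2 u]
  rw [hVW]
  apply mul_le_mul_right
  apply ENNReal.ofReal_le_ofReal
  -- core inequality
  set m : ℕ := t - q.2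
  set r : ℕ := s - q.1
  set δ : ℝ := (om' j k - om j k) * lam j with hδdef
  set C : ℝ := (∑ l ∈ T, om' j l * lam j) with hCdef
  have hδ0 : 0 ≤ δ := mul_nonneg (by linarith) (hlam j).le
  have hC0 : 0 ≤ C := Finset.sum_nonneg fun l hl => mul_nonneg (hom0' j l (hTle l hl)) (hlam j).le
  have hA0 : 0 ≤ om j k * lam j := mul_nonneg (hom0 j k hkj) (hlam j).le
  -- row sum identities
  have hrow : om j k + ∑ l ∈ S1, om j l + ∑ l ∈ T, om j l = 1 := by
    have := hsum j
    rw [hunion, Finset.sum_union hdisjoint, ← Finset.add_sum_erase _ _ hki'] at this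
    linarith
  have hrow' : om' j k + ∑ l ∈ S1, om' j l + ∑ l ∈ T, om' j l = 1 := by
    have := hsum' j
    rw [hunion, Finset.sum_union hdisjoint, ← Finset.add_sum_erase _ _ hki'] at this
    linarith
  have hS1eq : ∑ l ∈ S1, om j l = ∑ l ∈ S1, om' j l :=
    Finset.sum_congr rfl fun l hl => hjeq l (hS1sub l hl) (hS1ne l hl)
  have hCb : ∑ l ∈ T, om j l * lam j = C + δ := by
    rw [hCdef, hδdef, ← Finset.sum_mul, ← Finset.sum_mul]
    have : ∑ l ∈ T, om j l = ∑ l ∈ T, om' j l + (om' j k - om j k) := by linarith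
    rw [this]
    ring
  have hA'eq : om' j k * lam j = om j k * lam j + δ := by rw [hδdef]; ring
  have hνeq : om' i k * lam i = om i k * lam i := by rw [hieq k hki]
  rw [hCb, hA'eq, hνeq]
  exact core_ineq hA0 hC0 hδ0
    (poisCdf_nonneg (mul_nonneg (hom0 i k hki) (hlam i).le) r) m
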